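/- In the deterministic-demand capacity game with 0 < gamma_i <= R for i = 1,2, every capacity pair (S_1, S_2) with S_1 + S_2 = B and S_i >= ((R - gamma_i)/(2R - gamma_i))*B for i = 1,2 is a pure Nash equilibrium. -/

import Mathlib

/-- `clamp x l u` truncates `x` below by `l` and above by `u`. -/
noncomputable def clamp (x l u : ℝ) : ℝ := min (max x l) u

/-- Firm `i`'s payoff in the deterministic-demand capacity game with demand
`B`, reservation utility `R` and opportunity cost `γ`, when it commits
capacity `Si` and the other firm commits `Sother`. -/
noncomputable def psi (R B γ Si Sother : ℝ) : ℝ :=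
  if Sother ≤ Si then
    -γ * Si + R * clamp (B - min B Sother) 0 Si
  else
    -γ * Si + R * clamp (B - min B Si) 0 Sother * min B Si / min B Sother

/-- `(S₁, S₂)` is a pure Nash equilibrium of the deterministic-demand capacity
game. -/
def IsCapacityNash (R B γ₁ γ₂ S₁ S₂ : ℝ) : Prop :=
  0 ≤ S₁ ∧ 0 ≤ S₂ ∧
  (∀ S' : ℝ, 0 ≤ S' → psi R B γ₁ S' S₂ ≤ psi R B γ₁ S₁ S₂) ∧
  (∀ S' : ℝ, 0 ≤ S' → psi R B γ₂ S' S₁ ≤ psi R B γ₂ S₂ S₁)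

lemma best_response (R B γ : ℝ) (hR : 0 < R) (hB : 0 < B)
    (hγ : 0 < γ) (hγR : γ ≤ R) (Si So : ℝ) (hSo : 0 ≤ So)
    (hsum : Si + So = B) (hlb : (R - γ) / (2 * R - γ) * B ≤ Si) :
    ∀ S' : ℝ, 0 ≤ S' → psi R B γ S' So ≤ psi R B γ Si So := by
  have h2Rγ : 0 < 2 * R - γ := by linarith
  rw [div_mul_eq_mul_div, div_le_iff₀ h2Rγ] at hlb
  have hSi0 : 0 ≤ Si := by nlinarith
  have hSiB : Si ≤ B := by linarith
  have hSoB : So ≤ B := by linarith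
  have heq : psi R B γ Si So = (R - γ) * Si := by
    unfold psi clamp
    rcases le_or_gt So Si with h | h
    · rw [if_pos h, min_eq_right hSoB]
      have hBS : B - So = Si := by linarith
      rw [hBS, max_eq_left hSi0, min_self]; ring
    · rw [if_neg (not_le.mpr h), min_eq_right hSiB]
      have hSo0 : 0 < So := lt_of_le_of_lt hSi0 h
      have hBS : B - Si = So := by linarith
      rw [hBS, max_eq_left hSo, min_self, min_eq_right hSoB]
      field_simp
      ring
  intro S' hS'
  rw [heq]
  unfold psi clamp
  rcases le_or_gt So S' with h | h
  · rw [if_pos h, min_eq_right hSoB]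
    have hBS : B - So = Si := by linarith
    rw [hBS, max_eq_left hSi0]
    rcases le_total S' Si with h' | h'
    · rw [min_eq_right h']; nlinarith
    · rw [min_eq_left h']; nlinarith
  · rw [if_neg (not_le.mpr h)]
    have hS'B : S' ≤ B := by linarith
    have hSo0 : 0 < So := lt_of_le_of_lt hS' h
    have hBS' : 0 ≤ B - S' := by linarith
    rw [min_eq_right hS'B, max_eq_left hBS', min_eq_right hSoB]
    rcases le_total So (B - S') with h' | h'
    · rw [min_eq_right h']
      have hq : R * So * S' / So = R * S' := by field_simp
      rw [hq]
      have hS'Si : S' ≤ Si := by linarith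
      nlinarith
    · rw [min_eq_left h']
      have hSiS' : Si ≤ S' := by linarith
      have hA : 0 ≤ γ * So - R * (So - Si) := by nlinarith
      have hkey : R * (B - S') * S' ≤ ((R - γ) * Si + γ * S') * So := by
        have hBe : B - S' = Si + So - S' := by linarith
        rw [hBe]
        nlinarith [mul_nonneg (sub_nonneg.2 hSiS') hA,
          mul_nonneg hR.le (sq_nonneg (S' - Si))]
      have : R * (B - S') * S' / So ≤ (R - γ) * Si + γ * S' := by
        rw [div_le_iff₀ hSo0]; linarith
      linarith

/-- In the deterministic-demand capacity game with `0 < γᵢ ≤ R`, every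
capacity pair `(S₁, S₂)` with `S₁ + S₂ = B` and
`Sᵢ ≥ ((R - γᵢ)/(2R - γᵢ)) * B` for `i = 1, 2` is a pure Nash equilibrium. -/
theorem capacity_equilibria_deterministic
    (R B γ₁ γ₂ : ℝ) (hR : 0 < R) (hB : 0 < B)
    (hγ₁ : 0 < γ₁) (hγ₁R : γ₁ ≤ R) (hγ₂ : 0 < γ₂) (hγ₂R : γ₂ ≤ R)
    (S₁ S₂ : ℝ) (hsum : S₁ + S₂ = B)
    (h1 : (R - γ₁) / (2 * R - γ₁) * B ≤ S₁)
    (h2 : (R - γ₂) / (2 * R - γ₂) * B ≤ S₂) :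
    IsCapacityNash R B γ₁ γ₂ S₁ S₂ := by
  have hS1 : 0 ≤ S₁ :=
    le_trans (mul_nonneg (div_nonneg (by linarith) (by linarith)) hB.le) h1
  have hS2 : 0 ≤ S₂ :=
    le_trans (mul_nonneg (div_nonneg (by linarith) (by linarith)) hB.le) h2
  exact ⟨hS1, hS2,
    best_response R B γ₁ hR hB hγ₁ hγ₁R S₁ S₂ hS2 hsum h1,
    best_response R B γ₂ hR hB hγ₂ hγ₂R S₂ S₁ hS1 (by linarith) h2⟩
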